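/- The composition γ_b = δ_b ∘ ε_b of the logarithmic erosion followed by the logarithmic dilation is an algebraic opening: it is increasing, anti-extensive (γ_b(f) ≤ f), and idempotent. -/
import Mathlib


noncomputable def lipAdd (M f g : ℝ) : ℝ := f + g - f * g / M

noncomputable def lipSub (M f g : ℝ) : ℝ := (f - g) / (1 - g / M)

noncomputable def logDil (M : ℝ) {D : Type*} [Fintype D] [AddGroup D] [Nonempty D]
    (b f : D → ℝ) (x : D) : ℝ :=
  Finset.univ.sup' Finset.univ_nonempty (fun h => lipAdd M (f (x - h)) (b h))

noncomputable def logEro (M : ℝ) {D : Type*} [Fintype D] [AddGroup D] [Nonempty D]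
    (b f : D → ℝ) (x : D) : ℝ :=
  Finset.univ.inf' Finset.univ_nonempty (fun h => lipSub M (f (x + h)) (b h))

/-- The logarithmic opening `γ_b = δ_b ∘ ε_b`. -/
noncomputable def logOpen (M : ℝ) {D : Type*} [Fintype D] [AddGroup D] [Nonempty D]
    (b f : D → ℝ) : D → ℝ :=
  logDil M b (logEro M b f)

lemma lip_adj {M a c d : ℝ} (hM : 0 < M) (hc : c < M) :
    lipAdd M a c ≤ d ↔ a ≤ lipSub M d c := by
  have h : 0 < 1 - c / M := by
    have := (div_lt_one hM).mpr hc; linarith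
  unfold lipAdd lipSub
  rw [le_div_iff₀ h, mul_sub, mul_one, mul_div_assoc]
  constructor <;> intro <;> linarith

lemma lipAdd_mono {M a a' c : ℝ} (hM : 0 < M) (hc : c < M) (h : a ≤ a') :
    lipAdd M a c ≤ lipAdd M a' c := by
  have h1 : 0 < 1 - c / M := by
    have := (div_lt_one hM).mpr hc; linarith
  unfold lipAdd
  rw [mul_div_assoc, mul_div_assoc]
  nlinarith [mul_nonneg (sub_nonneg.2 h) h1.le]

lemma lipSub_mono {M d d' c : ℝ} (hM : 0 < M) (hc : c < M) (h : d ≤ d') :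
    lipSub M d c ≤ lipSub M d' c := by
  have h1 : 0 < 1 - c / M := by
    have := (div_lt_one hM).mpr hc; linarith
  unfold lipSub
  gcongr

section Galois

variable {M : ℝ} {D : Type*} [Fintype D] [AddGroup D] [Nonempty D]

lemma logDil_mono (hM : 0 < M) (b : D → ℝ) (hb : ∀ x, b x < M) {f g : D → ℝ}
    (h : ∀ x, f x ≤ g x) (x : D) : logDil M b f x ≤ logDil M b g x := by
  apply Finset.sup'_mono_fun
  intro h' _
  exact lipAdd_mono hM (hb h') (h _)

lemma logEro_mono (hM : 0 < M) (b : D → ℝ) (hb : ∀ x, b x < M) {f g : D → ℝ}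
    (h : ∀ x, f x ≤ g x) (x : D) : logEro M b f x ≤ logEro M b g x := by
  apply Finset.le_inf'
  intro h' _
  exact (Finset.inf'_le _ (Finset.mem_univ h')).trans (lipSub_mono hM (hb h') (h _))

lemma log_galois (hM : 0 < M) (b : D → ℝ) (hb : ∀ x, b x < M) (f g : D → ℝ) :
    (∀ x, logDil M b f x ≤ g x) ↔ (∀ x, f x ≤ logEro M b g x) := by
  unfold logDil logEro
  simp only [Finset.sup'_le_iff, Finset.le_inf'_iff, Finset.mem_univ, true_implies]
  constructor
  · intro H x h
    have := (lip_adj hM (hb h)).mp (H (x + h) h)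
    simpa using this
  · intro H x h
    refine (lip_adj hM (hb h)).mpr ?_
    have := H (x - h) h
    simpa using this

lemma logOpen_anti (hM : 0 < M) (b : D → ℝ) (hb : ∀ x, b x < M) (f : D → ℝ) (x : D) :
    logOpen M b f x ≤ f x :=
  (log_galois hM b hb (logEro M b f) f).mpr (fun _ => le_refl _) x

lemma logOpen_ext (hM : 0 < M) (b : D → ℝ) (hb : ∀ x, b x < M) (f : D → ℝ) (x : D) :
    f x ≤ logEro M b (logDil M b f) x :=
  (log_galois hM b hb f (logDil M b f)).mp (fun _ => le_refl _) x

end Galois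

/-- `γ_b = δ_b ∘ ε_b` is an algebraic opening: increasing,
anti-extensive and idempotent. -/
theorem logOpen_is_opening (M : ℝ) (hM : 0 < M) {D : Type*} [Fintype D]
    [AddGroup D] [Nonempty D] (b : D → ℝ) (hb : ∀ x, b x < M) :
    (∀ f g : D → ℝ, (∀ x, f x < M) → (∀ x, g x < M) → (∀ x, f x ≤ g x) →
      ∀ x, logOpen M b f x ≤ logOpen M b g x) ∧
    (∀ f : D → ℝ, (∀ x, f x < M) → ∀ x, logOpen M b f x ≤ f x) ∧
    (∀ f : D → ℝ, (∀ x, f x < M) → logOpen M b (logOpen M b f) = logOpen M b f) := by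
  refine ⟨?_, ?_, ?_⟩
  · intro f g _ _ hfg x
    exact logDil_mono hM b hb (logEro_mono hM b hb hfg) x
  · intro f _ x
    exact logOpen_anti hM b hb f x
  · intro f _
    funext x
    apply le_antisymm
    · exact logOpen_anti hM b hb (logOpen M b f) x
    · -- need: logOpen M b f x ≤ logOpen M b (logOpen M b f) x
      -- i.e. δ(εf) ≤ δ(ε(δ(εf))); suffices εf ≤ ε(δ(εf)), which is extensivity
      exact logDil_mono hM b hb
        (fun y => logOpen_ext hM b hb (logEro M b f) y) x
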